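/- Let (Kⱼ)_{j≥1} be compact metric spaces and suppose each C(Kⱼ) has an Auerbach basis (f_{k,j}; f*_{k,j})_{k≥0} with f_{0,j} the constant function 1. Then the unitization X = (C(K₁) ⊕ C(K₂) ⊕ ...)_{c₀} ⊕ 1 admits an Auerbach basis (x_k; x_k*)_{k≥0} with x₀ = (0, 1). -/

import Mathlib

/-- An Auerbach basis of a normed space: a biorthogonal system of norm-one vectors and
norm-one functionals which is fundamental (the closed linear span of the vectors is the
whole space) and total (the functionals separate points). -/
structure IsAuerbachBasis {X : Type*} [NormedAddCommGroup X] [NormedSpace ℝ X]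
    {ι : Type*} (x : ι → X) (f : ι → X →L[ℝ] ℝ) : Prop where
  biorth_eq : ∀ k, f k (x k) = 1
  biorth_ne : ∀ k j, k ≠ j → f k (x j) = 0
  norm_vec : ∀ n, ‖x n‖ = 1
  norm_fun : ∀ n, ‖f n‖ = 1
  fundamental : (Submodule.span ℝ (Set.range x)).topologicalClosure = ⊤
  total : ∀ y, (∀ n, f n y = 0) → y = 0

open scoped ENNReal
set_option synthInstance.maxHeartbeats 1000000
set_option maxHeartbeats 1000000

/-- The unitization `X = (C(K₁) ⊕ C(K₂) ⊕ ⋯)_{c₀} ⊕ 1`, realized isometrically inside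
`ℓ^∞(∏ⱼ C(Kⱼ))` as the set of sequences `(gⱼ)ⱼ` such that `gⱼ - c • 1 → 0` in norm for
some constant `c`: the pair `((fⱼ)ⱼ, c)` corresponds to `(fⱼ + c • 1)ⱼ`, which has exactly
the norm `supⱼ sup_{ω ∈ Kⱼ} |fⱼ(ω) + c|`. -/
noncomputable def unitizationSub (K : ℕ → Type*) [∀ j, MetricSpace (K j)]
    [∀ j, CompactSpace (K j)] : Submodule ℝ (lp (fun j => C(K j, ℝ)) ∞) where
  carrier := {g | ∃ c : ℝ,
    Filter.Tendsto (fun j => ‖g j - c • (1 : C(K j, ℝ))‖) Filter.atTop (nhds 0)}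
  zero_mem' := ⟨0, by simp⟩
  add_mem' := by
    rintro y z ⟨c1, h1⟩ ⟨c2, h2⟩
    refine ⟨c1 + c2, squeeze_zero (fun j => norm_nonneg _) (fun j => ?_)
      (by simpa using h1.add h2)⟩
    have : (↑(y + z) : ∀ j, C(K j, ℝ)) j - (c1 + c2) • 1
        = (y j - c1 • 1) + (z j - c2 • 1) := by
      rw [lp.coeFn_add]
      simp [add_smul]
      abel
    rw [this]
    exact norm_add_le _ _
  smul_mem' := by
    rintro c y ⟨c0, h⟩
    refine ⟨c * c0, ?_⟩
    have : ∀ j, ‖(↑(c • y) : ∀ j, C(K j, ℝ)) j - (c * c0) • (1 : C(K j, ℝ))‖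
        = ‖c‖ * ‖y j - c0 • (1 : C(K j, ℝ))‖ := by
      intro j
      rw [lp.coeFn_smul]
      rw [show (c • (y : ∀ j, C(K j, ℝ))) j - (c * c0) • (1 : C(K j, ℝ))
          = c • (y j - c0 • 1) by simp [smul_smul, smul_sub]]
      exact norm_smul c (y j - c0 • (1 : C(K j, ℝ)))
    simp only [this]
    simpa using h.const_mul ‖c‖

open Filter
set_option maxHeartbeats 3000000

namespace S16
variable (K : ℕ → Type) [∀ j, MetricSpace (K j)] [∀ j, CompactSpace (K j)]

noncomputable abbrev L := lp (fun j => C(K j, ℝ)) ∞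

variable {K}

lemma mem_unitizationSub {g : L K} : g ∈ unitizationSub K ↔ ∃ c : ℝ,
    Tendsto (fun j => ‖g j - c • (1 : C(K j, ℝ))‖) atTop (nhds 0) := Iff.rfl

lemma norm_coord_le (g : unitizationSub K) (j : ℕ) : ‖(g : L K) j‖ ≤ ‖g‖ :=
  lp.norm_apply_le_norm ENNReal.top_ne_zero (g : L K) j

/-- evaluation of a block functional at a coordinate, as a functional on `lp`. -/
noncomputable def coordL (j : ℕ) (φ : C(K j, ℝ) →L[ℝ] ℝ) : L K →L[ℝ] ℝ :=
  LinearMap.mkContinuous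
    { toFun := fun g => φ (g j)
      map_add' := fun g h => by simp [lp.coeFn_add]
      map_smul' := fun c g => by simp [lp.coeFn_smul] }
    ‖φ‖ (fun g => by
      calc ‖φ (g j)‖ ≤ ‖φ‖ * ‖g j‖ := φ.le_opNorm _
      _ ≤ ‖φ‖ * ‖g‖ := by
        gcongr
        exact lp.norm_apply_le_norm ENNReal.top_ne_zero g j)

@[simp] lemma coordL_apply (j : ℕ) (φ : C(K j, ℝ) →L[ℝ] ℝ) (g : L K) :
    coordL j φ g = φ (g j) := rfl

/-- evaluation of a block functional at a coordinate, on the unitization. -/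
noncomputable def coordX (j : ℕ) (φ : C(K j, ℝ) →L[ℝ] ℝ) : unitizationSub K →L[ℝ] ℝ :=
  (coordL j φ).comp (unitizationSub K).subtypeL

@[simp] lemma coordX_apply (j : ℕ) (φ : C(K j, ℝ) →L[ℝ] ℝ) (g : unitizationSub K) :
    coordX j φ g = φ ((g : L K) j) := rfl

lemma norm_coordX_le (j : ℕ) (φ : C(K j, ℝ) →L[ℝ] ℝ) (hφ : ‖φ‖ ≤ 1) :
    ‖coordX j φ‖ ≤ 1 := by
  refine ContinuousLinearMap.opNorm_le_bound _ zero_le_one (fun g => ?_)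
  calc ‖coordX j φ g‖ ≤ ‖φ‖ * ‖(g : L K) j‖ := φ.le_opNorm _
  _ ≤ 1 * ‖g‖ := mul_le_mul hφ (norm_coord_le g j) (norm_nonneg _) zero_le_one

lemma norm_oneCK {j : ℕ} [Nonempty (K j)] : ‖(1 : C(K j, ℝ))‖ = 1 := norm_one

lemma norm_smul_oneCK {j : ℕ} [Nonempty (K j)] (c : ℝ) : ‖c • (1 : C(K j, ℝ))‖ = ‖c‖ := by
  refine le_antisymm ((ContinuousMap.norm_le _ (norm_nonneg c)).2 (fun ω => by simp)) ?_
  have ω := Classical.arbitrary (K j)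
  calc ‖c‖ = ‖(c • (1 : C(K j, ℝ))) ω‖ := by simp
  _ ≤ _ := ContinuousMap.norm_coe_le_norm _ ω

/-- the element of `lp` all of whose blocks are the constant `1`. -/
noncomputable def oneV : L K :=
  ⟨fun _ => 1, memℓp_infty ⟨1, by
    rintro x ⟨j, rfl⟩
    exact (ContinuousMap.norm_le _ zero_le_one).2 (fun ω => by simp)⟩⟩

@[simp] lemma oneV_apply (j : ℕ) : (oneV (K := K)) j = 1 := rfl

lemma oneV_mem : oneV (K := K) ∈ unitizationSub K := by
  refine ⟨1, ?_⟩
  simpa using tendsto_const_nhds (α := ℝ) (x := 0) (f := atTop (α := ℕ))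

/-- the element whose blocks are `-1` for `j ≤ n` and `1` for `j > n`. -/
noncomputable def vV (n : ℕ) : L K :=
  ⟨fun j => if j ≤ n then -1 else 1, memℓp_infty ⟨1, by
    rintro x ⟨j, rfl⟩
    dsimp only
    split <;>
    · refine (ContinuousMap.norm_le _ zero_le_one).2 (fun ω => by simp)⟩⟩

lemma vV_apply (n j : ℕ) : (vV (K := K) n) j = if j ≤ n then -1 else 1 := rfl

lemma vV_mem (n : ℕ) : vV (K := K) n ∈ unitizationSub K := by
  refine ⟨1, ?_⟩
  have : ∀ j, n < j → ‖(vV (K := K) n) j - (1 : ℝ) • (1 : C(K j, ℝ))‖ = 0 := by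
    intro j hj
    rw [vV_apply, if_neg (by omega)]
    simp
  have h : (fun j => ‖(vV (K := K) n) j - (1 : ℝ) • (1 : C(K j, ℝ))‖) =ᶠ[atTop] (fun _ => 0) :=
    Filter.eventually_atTop.2 ⟨n + 1, fun j hj => this j (by omega)⟩
  exact Tendsto.congr' h.symm tendsto_const_nhds

/-- the element supported at block `j`. -/
noncomputable def sgl (j : ℕ) (a : C(K j, ℝ)) : L K := lp.single ∞ j a

lemma sgl_apply_self (j : ℕ) (a : C(K j, ℝ)) : (sgl j a) j = a := by
  exact lp.single_apply_self (E := fun j => C(K j, ℝ)) ∞ j a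

lemma sgl_apply_ne (j : ℕ) (a : C(K j, ℝ)) {i : ℕ} (h : i ≠ j) : (sgl j a) i = 0 := by
  exact lp.single_apply_ne (E := fun j => C(K j, ℝ)) ∞ j a h

lemma single_mem (j : ℕ) (a : C(K j, ℝ)) : sgl j a ∈ unitizationSub K := by
  refine ⟨0, ?_⟩
  have h : (fun i => ‖(sgl j a) i - (0 : ℝ) • (1 : C(K i, ℝ))‖) =ᶠ[atTop]
      (fun _ => 0) := by
    refine Filter.eventually_atTop.2 ⟨j + 1, fun i hi => ?_⟩
    dsimp only
    rw [sgl_apply_ne j a (by omega : i ≠ j)]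
    simp
  exact Tendsto.congr' h.symm tendsto_const_nhds

lemma norm_sgl (j : ℕ) (a : C(K j, ℝ)) : ‖sgl j a‖ = ‖a‖ := by
  refine le_antisymm (lp.norm_le_of_forall_le (norm_nonneg a) (fun i => ?_)) ?_
  · rcases eq_or_ne i j with rfl | hij
    · rw [sgl_apply_self]
    · rw [sgl_apply_ne j a hij]; simp
  · calc ‖a‖ = ‖(sgl j a) j‖ := by rw [sgl_apply_self]
    _ ≤ ‖sgl j a‖ := lp.norm_apply_le_norm ENNReal.top_ne_zero _ j

lemma norm_oneV [∀ j, Nonempty (K j)] : ‖oneV (K := K)‖ = 1 := by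
  refine le_antisymm (lp.norm_le_of_forall_le zero_le_one (fun i => by simp [norm_oneCK])) ?_
  calc (1 : ℝ) = ‖(oneV (K := K)) 0‖ := by simp [norm_oneCK]
  _ ≤ ‖oneV (K := K)‖ := lp.norm_apply_le_norm ENNReal.top_ne_zero _ 0

lemma norm_vV [∀ j, Nonempty (K j)] (n : ℕ) : ‖vV (K := K) n‖ = 1 := by
  refine le_antisymm (lp.norm_le_of_forall_le zero_le_one (fun i => ?_)) ?_
  · rw [vV_apply]; split <;> simp [norm_oneCK]
  · calc (1 : ℝ) = ‖(vV (K := K) n) 0‖ := by rw [vV_apply, if_pos (Nat.zero_le n)]; simp [norm_oneCK]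
    _ ≤ ‖vV (K := K) n‖ := lp.norm_apply_le_norm ENNReal.top_ne_zero _ 0

section clim

lemma tendsto_phi_of_mem {g : L K} {c : ℝ}
    (h : Tendsto (fun j => ‖g j - c • (1 : C(K j, ℝ))‖) atTop (nhds 0))
    {φ : ∀ j, C(K j, ℝ) →L[ℝ] ℝ} (hφ1 : ∀ j, φ j 1 = 1) (hφn : ∀ j, ‖φ j‖ ≤ 1) :
    Tendsto (fun j => φ j (g j)) atTop (nhds c) := by
  have key : ∀ j, ‖φ j (g j) - c‖ ≤ ‖g j - c • (1 : C(K j, ℝ))‖ := by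
    intro j
    have e : φ j (g j) - c = φ j (g j - c • 1) := by
      rw [map_sub, map_smul]
      simp [hφ1 j]
    rw [e]
    calc ‖φ j (g j - c • 1)‖ ≤ ‖φ j‖ * ‖g j - c • 1‖ := (φ j).le_opNorm _
    _ ≤ 1 * ‖g j - c • 1‖ := by
        exact mul_le_mul_of_nonneg_right (hφn j) (norm_nonneg _)
    _ = ‖g j - c • 1‖ := one_mul _
  have h0 : Tendsto (fun j => φ j (g j) - c) atTop (nhds 0) := squeeze_zero_norm key h
  exact tendsto_sub_nhds_zero_iff.1 h0

/-- the "limit constant" of an element of the unitization. -/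
noncomputable def climF (g : unitizationSub K) : ℝ :=
  Classical.choose (mem_unitizationSub.1 g.2)

lemma climF_spec (g : unitizationSub K) :
    Tendsto (fun j => ‖(g : L K) j - climF g • (1 : C(K j, ℝ))‖) atTop (nhds 0) :=
  Classical.choose_spec (mem_unitizationSub.1 g.2)

variable {φ : ∀ j, C(K j, ℝ) →L[ℝ] ℝ} (hφ1 : ∀ j, φ j 1 = 1) (hφn : ∀ j, ‖φ j‖ ≤ 1)

include hφ1 hφn

lemma climF_eq (g : unitizationSub K) {c : ℝ}
    (h : Tendsto (fun j => ‖(g : L K) j - c • (1 : C(K j, ℝ))‖) atTop (nhds 0)) :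
    climF g = c :=
  tendsto_nhds_unique (tendsto_phi_of_mem (climF_spec g) hφ1 hφn)
    (tendsto_phi_of_mem h hφ1 hφn)

lemma climF_add (g h : unitizationSub K) : climF (g + h) = climF g + climF h := by
  refine climF_eq hφ1 hφn _ ?_
  have h1 := climF_spec g
  have h2 := climF_spec h
  refine squeeze_zero (fun j => norm_nonneg _) (fun j => ?_) (by simpa using h1.add h2)
  have e : ((g + h : unitizationSub K) : L K) j - (climF g + climF h) • (1 : C(K j, ℝ))
      = ((g : L K) j - climF g • 1) + ((h : L K) j - climF h • 1) := by
    rw [Submodule.coe_add, lp.coeFn_add]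
    simp [add_smul]
    abel
  rw [e]
  exact norm_add_le _ _

lemma climF_smul (c : ℝ) (g : unitizationSub K) : climF (c • g) = c * climF g := by
  refine climF_eq hφ1 hφn _ ?_
  have h1 := climF_spec g
  have e : ∀ j, ‖((c • g : unitizationSub K) : L K) j - (c * climF g) • (1 : C(K j, ℝ))‖
      = ‖c‖ * ‖(g : L K) j - climF g • (1 : C(K j, ℝ))‖ := by
    intro j
    rw [Submodule.coe_smul, lp.coeFn_smul]
    rw [show (c • ((g : L K) : ∀ j, C(K j, ℝ))) j - (c * climF g) • (1 : C(K j, ℝ))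
        = c • ((g : L K) j - climF g • 1) by simp [smul_smul, smul_sub]]
    exact norm_smul c ((g : L K) j - climF g • 1)
  simp only [e]
  simpa using h1.const_mul ‖c‖

omit hφ1 hφn in
lemma abs_climF_le [∀ j, Nonempty (K j)] (g : unitizationSub K) : ‖climF g‖ ≤ ‖g‖ := by
  have h1 := climF_spec g
  have htd : Tendsto (fun j => ‖climF g‖ - ‖(g : L K) j - climF g • (1 : C(K j, ℝ))‖)
      atTop (nhds ‖climF g‖) := by
    simpa using tendsto_const_nhds.sub h1
  refine le_of_tendsto htd (Filter.Eventually.of_forall (fun j => ?_))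
  have e1 : ‖climF g • (1 : C(K j, ℝ))‖ = ‖climF g‖ := norm_smul_oneCK _
  have : ‖climF g • (1 : C(K j, ℝ))‖ ≤ ‖(g : L K) j‖ + ‖(g : L K) j - climF g • 1‖ := by
    calc ‖climF g • (1 : C(K j, ℝ))‖
        = ‖(g : L K) j - ((g : L K) j - climF g • 1)‖ := by rw [sub_sub_cancel]
    _ ≤ ‖(g : L K) j‖ + ‖(g : L K) j - climF g • 1‖ := norm_sub_le _ _
  rw [e1] at this
  have h2 := norm_coord_le g j
  linarith

/-- the limit functional on the unitization. -/
noncomputable def climCLM [∀ j, Nonempty (K j)] : unitizationSub K →L[ℝ] ℝ :=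
  LinearMap.mkContinuous
    { toFun := climF
      map_add' := climF_add hφ1 hφn
      map_smul' := fun c g => climF_smul hφ1 hφn c g }
    1 (fun g => (abs_climF_le g).trans_eq (one_mul _).symm)

@[simp] lemma climCLM_apply [∀ j, Nonempty (K j)] (g : unitizationSub K) :
    climCLM hφ1 hφn g = climF g := rfl

lemma norm_climCLM_le [∀ j, Nonempty (K j)] : ‖climCLM hφ1 hφn‖ ≤ 1 :=
  LinearMap.mkContinuous_norm_le _ zero_le_one _

end clim

lemma climF_eq' [∀ j, Nonempty (K j)] (g : unitizationSub K) {c : ℝ}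
    (h : Tendsto (fun j => ‖(g : L K) j - c • (1 : C(K j, ℝ))‖) atTop (nhds 0)) :
    climF g = c := by
  have h1 := climF_spec g
  have key : ∀ j, ‖climF g - c‖
      ≤ ‖(g : L K) j - climF g • (1 : C(K j, ℝ))‖ + ‖(g : L K) j - c • (1 : C(K j, ℝ))‖ := by
    intro j
    calc ‖climF g - c‖ = ‖(climF g - c) • (1 : C(K j, ℝ))‖ := (norm_smul_oneCK _).symm
    _ = ‖((g : L K) j - c • (1 : C(K j, ℝ))) - ((g : L K) j - climF g • (1 : C(K j, ℝ)))‖ := by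
        congr 1
        rw [sub_smul]
        abel
    _ ≤ ‖(g : L K) j - c • (1 : C(K j, ℝ))‖ + ‖(g : L K) j - climF g • (1 : C(K j, ℝ))‖ :=
        norm_sub_le _ _
    _ = _ := add_comm _ _
  have h0 : Tendsto (fun _ : ℕ => ‖climF g - c‖) atTop (nhds 0) :=
    squeeze_zero (fun _ => norm_nonneg _) key (by simpa using h1.add h)
  have h2 : ‖climF g - c‖ = 0 := tendsto_nhds_unique tendsto_const_nhds h0
  have := norm_eq_zero.1 h2
  linarith [sub_eq_zero.1 this]

/-- the all-ones element of the unitization. -/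
noncomputable def xOne : unitizationSub K := ⟨oneV, oneV_mem⟩

/-- the staircase elements of the unitization. -/
noncomputable def xV (n : ℕ) : unitizationSub K := ⟨vV n, vV_mem n⟩

/-- single-block elements of the unitization. -/
noncomputable def xSgl (j : ℕ) (a : C(K j, ℝ)) : unitizationSub K := ⟨sgl j a, single_mem j a⟩

@[simp] lemma xOne_coe : ((xOne : unitizationSub K) : L K) = oneV := rfl
@[simp] lemma xV_coe (n : ℕ) : ((xV n : unitizationSub K) : L K) = vV n := rfl
@[simp] lemma xSgl_coe (j : ℕ) (a : C(K j, ℝ)) :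
    ((xSgl j a : unitizationSub K) : L K) = sgl j a := rfl

lemma climF_xOne [∀ j, Nonempty (K j)] : climF (xOne (K := K)) = 1 := by
  refine climF_eq' _ ?_
  have : ∀ j : ℕ, ‖(oneV (K := K)) j - (1 : ℝ) • (1 : C(K j, ℝ))‖ = 0 := fun j => by simp
  simpa [this] using tendsto_const_nhds (α := ℝ) (x := 0) (f := atTop (α := ℕ))

lemma climF_xV [∀ j, Nonempty (K j)] (n : ℕ) : climF (xV (K := K) n) = 1 := by
  refine climF_eq' _ ?_
  have h : (fun j => ‖(vV (K := K) n) j - (1 : ℝ) • (1 : C(K j, ℝ))‖) =ᶠ[atTop]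
      (fun _ => 0) := by
    refine Filter.eventually_atTop.2 ⟨n + 1, fun j hj => ?_⟩
    dsimp only
    rw [vV_apply, if_neg (by omega)]
    simp
  exact Tendsto.congr' h.symm tendsto_const_nhds

lemma climF_xSgl [∀ j, Nonempty (K j)] (j : ℕ) (a : C(K j, ℝ)) :
    climF (xSgl (K := K) j a) = 0 := by
  refine climF_eq' _ ?_
  have h : (fun i => ‖(sgl (K := K) j a) i - (0 : ℝ) • (1 : C(K i, ℝ))‖) =ᶠ[atTop]
      (fun _ => 0) := by
    refine Filter.eventually_atTop.2 ⟨j + 1, fun i hi => ?_⟩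
    dsimp only
    rw [sgl_apply_ne j a (by omega : i ≠ j)]
    simp
  exact Tendsto.congr' h.symm tendsto_const_nhds

lemma norm_xSgl (j : ℕ) (a : C(K j, ℝ)) : ‖xSgl (K := K) j a‖ = ‖a‖ := norm_sgl j a

lemma sgl_add (j : ℕ) (a b : C(K j, ℝ)) : sgl j (a + b) = sgl j a + sgl j b := by
  refine lp.ext (funext fun i => ?_)
  rcases eq_or_ne i j with rfl | hij
  · rw [lp.coeFn_add]
    simp only [Pi.add_apply, sgl_apply_self]
  · rw [lp.coeFn_add]
    simp only [Pi.add_apply, sgl_apply_ne _ _ hij]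
    simp

lemma sgl_smul (j : ℕ) (c : ℝ) (a : C(K j, ℝ)) : sgl j (c • a) = c • sgl j a := by
  refine lp.ext (funext fun i => ?_)
  rcases eq_or_ne i j with rfl | hij
  · rw [lp.coeFn_smul]
    simp only [Pi.smul_apply, sgl_apply_self]
  · rw [lp.coeFn_smul]
    simp only [Pi.smul_apply, sgl_apply_ne _ _ hij]
    simp

/-- the single-block embedding, as a continuous linear map into the unitization. -/
noncomputable def xSglCLM (j : ℕ) : C(K j, ℝ) →L[ℝ] unitizationSub K :=
  LinearMap.mkContinuous
    { toFun := fun a => xSgl j a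
      map_add' := fun a b => by
        apply Subtype.ext
        simp only [xSgl_coe]
        exact sgl_add j a b
      map_smul' := fun c a => by
        apply Subtype.ext
        simp only [xSgl_coe, RingHom.id_apply, Submodule.coe_smul]
        exact sgl_smul j c a }
    1 (fun a => by rw [one_mul]; exact le_of_eq (norm_xSgl j a))

@[simp] lemma xSglCLM_apply (j : ℕ) (a : C(K j, ℝ)) : xSglCLM j a = xSgl j a := rfl

section family

variable (fv : ∀ j, ℕ → C(K j, ℝ)) (fsv : ∀ j, ℕ → C(K j, ℝ) →L[ℝ] ℝ)

/-- The candidate Auerbach vectors, indexed by `Option (ℕ ⊕ ℕ × ℕ)`. -/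
noncomputable def XV : Option (ℕ ⊕ ℕ × ℕ) → unitizationSub K
  | none => xOne
  | some (Sum.inl n) => xV n
  | some (Sum.inr (j, k)) => xSgl j (fv j (k + 1))

variable [∀ j, Nonempty (K j)]
variable (hφ1 : ∀ j, (fun i => fsv i 0) j 1 = 1) (hφn : ∀ j, ‖(fun i => fsv i 0) j‖ ≤ 1)

/-- The candidate Auerbach functionals. -/
noncomputable def FV : Option (ℕ ⊕ ℕ × ℕ) → unitizationSub K →L[ℝ] ℝ
  | none => (2⁻¹ : ℝ) • (coordX 0 (fsv 0 0) + climCLM hφ1 hφn)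
  | some (Sum.inl n) => (2⁻¹ : ℝ) • (coordX (n + 1) (fsv (n + 1) 0) - coordX n (fsv n 0))
  | some (Sum.inr (j, k)) => coordX j (fsv j (k + 1))

end family

lemma xSgl_one_zero [∀ j, Nonempty (K j)] :
    xSgl (K := K) 0 (1 : C(K 0, ℝ)) = (2⁻¹ : ℝ) • (xOne - xV 0) := by
  apply Subtype.ext
  rw [Submodule.coe_smul, Submodule.coe_sub, xSgl_coe, xOne_coe, xV_coe]
  refine lp.ext (funext fun i => ?_)
  rw [lp.coeFn_smul, Pi.smul_apply, lp.coeFn_sub, Pi.sub_apply]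
  rcases Nat.eq_zero_or_pos i with rfl | hi
  · rw [sgl_apply_self, oneV_apply, vV_apply, if_pos (le_refl 0)]
    ext ω
    simp
    norm_num
  · rw [sgl_apply_ne _ _ (by omega : i ≠ 0), oneV_apply, vV_apply, if_neg (by omega)]
    simp

lemma xSgl_one_succ [∀ j, Nonempty (K j)] (n : ℕ) :
    xSgl (K := K) (n + 1) (1 : C(K (n + 1), ℝ)) = (2⁻¹ : ℝ) • (xV n - xV (n + 1)) := by
  apply Subtype.ext
  rw [Submodule.coe_smul, Submodule.coe_sub, xSgl_coe, xV_coe, xV_coe]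
  refine lp.ext (funext fun i => ?_)
  rw [lp.coeFn_smul, Pi.smul_apply, lp.coeFn_sub, Pi.sub_apply, vV_apply, vV_apply]
  rcases eq_or_ne i (n + 1) with rfl | hi
  · rw [sgl_apply_self, if_neg (by omega), if_pos (le_refl (n + 1))]
    ext ω
    simp
    norm_num
  · rw [sgl_apply_ne _ _ hi]
    rcases le_or_gt i n with h | h
    · rw [if_pos h, if_pos (by omega)]
      simp
    · rw [if_neg (by omega), if_neg (by omega)]
      simp

section master

variable (fv : ∀ j, ℕ → C(K j, ℝ)) (fsv : ∀ j, ℕ → C(K j, ℝ) →L[ℝ] ℝ)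
variable [∀ j, Nonempty (K j)]
variable (hφ1 : ∀ j, (fun i => fsv i 0) j 1 = 1) (hφn : ∀ j, ‖(fun i => fsv i 0) j‖ ≤ 1)

lemma norm_xOne : ‖xOne (K := K)‖ = 1 := norm_oneV
lemma norm_xV (n : ℕ) : ‖xV (K := K) n‖ = 1 := norm_vV n


end master

end S16

namespace S16
variable {K : ℕ → Type} [∀ j, MetricSpace (K j)] [∀ j, CompactSpace (K j)]
  [∀ j, Nonempty (K j)]

theorem fund_XV (fv : ∀ j, ℕ → C(K j, ℝ))
    (hb : ∀ j, (Submodule.span ℝ (Set.range (fv j))).topologicalClosure = ⊤)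
    (hone : ∀ j, fv j 0 = 1) :
    (Submodule.span ℝ (Set.range (XV (K := K) fv))).topologicalClosure = ⊤ := by
  rw [Submodule.eq_top_iff']
  set M := (Submodule.span ℝ (Set.range (XV (K := K) fv))).topologicalClosure with hM
  have hcl : IsClosed ((M : Set (unitizationSub K))) :=
    Submodule.isClosed_topologicalClosure _
  have hmem : ∀ o, XV (K := K) fv o ∈ M := fun o =>
    Submodule.le_topologicalClosure (Submodule.span ℝ (Set.range (XV (K := K) fv)))
      (Submodule.subset_span (Set.mem_range_self o))
  have hone_mem : xOne (K := K) ∈ M := hmem none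
  have hxV_mem : ∀ n, xV (K := K) n ∈ M := fun n => hmem (some (Sum.inl n))
  have hsgl_one : ∀ j : ℕ, xSgl (K := K) j (1 : C(K j, ℝ)) ∈ M := by
    intro j
    cases j with
    | zero =>
      rw [xSgl_one_zero]
      exact M.smul_mem _ (M.sub_mem hone_mem (hxV_mem 0))
    | succ n =>
      rw [xSgl_one_succ]
      exact M.smul_mem _ (M.sub_mem (hxV_mem n) (hxV_mem (n + 1)))
  have hsgl_all : ∀ (j : ℕ) (a : C(K j, ℝ)), xSgl (K := K) j a ∈ M := by
    intro j
    have hNcl : IsClosed ((M.comap (xSglCLM (K := K) j).toLinearMap :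
        Submodule ℝ C(K j, ℝ)) : Set C(K j, ℝ)) :=
      hcl.preimage (xSglCLM (K := K) j).continuous
    have hspan : Submodule.span ℝ (Set.range (fv j)) ≤
        M.comap (xSglCLM (K := K) j).toLinearMap := by
      rw [Submodule.span_le]
      rintro a ⟨k, rfl⟩
      show xSglCLM (K := K) j (fv j k) ∈ M
      cases k with
      | zero =>
        rw [xSglCLM_apply, hone j]
        exact hsgl_one j
      | succ k => exact hmem (some (Sum.inr (j, k)))
    have htop : (Submodule.span ℝ (Set.range (fv j))).topologicalClosure ≤
        M.comap (xSglCLM (K := K) j).toLinearMap :=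
      Submodule.topologicalClosure_minimal _ hspan hNcl
    rw [hb j] at htop
    intro a
    exact htop Submodule.mem_top
  intro g
  have hc := climF_spec g
  set c := climF g with hcdef
  set h : unitizationSub K := g - c • xOne with hh
  have hcoord : ∀ i, (h : L K) i = (g : L K) i - c • (1 : C(K i, ℝ)) := by
    intro i
    rw [hh, Submodule.coe_sub, Submodule.coe_smul, xOne_coe, lp.coeFn_sub, Pi.sub_apply,
      lp.coeFn_smul, Pi.smul_apply, oneV_apply]
  have hsum : ∀ (n i : ℕ),
      ((∑ j ∈ Finset.range n, xSglCLM (K := K) j ((h : L K) j) : unitizationSub K) : L K) i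
        = if i < n then (h : L K) i else 0 := by
    intro n i
    rw [Submodule.coe_sum]
    simp only [xSglCLM_apply, xSgl_coe]
    rw [lp.coeFn_sum, Finset.sum_apply]
    by_cases hi : i < n
    · rw [if_pos hi]
      rw [Finset.sum_eq_single_of_mem i (Finset.mem_range.2 hi)
        (fun b _ hbi => sgl_apply_ne _ _ (Ne.symm hbi))]
      exact sgl_apply_self _ _
    · rw [if_neg hi]
      refine Finset.sum_eq_zero (fun b hbmem => ?_)
      exact sgl_apply_ne _ _ (by rw [Finset.mem_range] at hbmem; omega)
  have htend : Tendsto (fun n => ∑ j ∈ Finset.range n, xSglCLM (K := K) j ((h : L K) j))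
      atTop (nhds h) := by
    rw [NormedAddCommGroup.tendsto_atTop]
    intro ε hε
    obtain ⟨N, hN⟩ := Metric.tendsto_atTop.1 hc (ε / 2) (by positivity)
    refine ⟨N, fun n hn => ?_⟩
    have hcoordbound : ∀ i,
        ‖((∑ j ∈ Finset.range n, xSglCLM (K := K) j ((h : L K) j) - h :
          unitizationSub K) : L K) i‖ ≤ ε / 2 := by
      intro i
      rw [Submodule.coe_sub, lp.coeFn_sub, Pi.sub_apply, hsum n i]
      by_cases hi : i < n
      · rw [if_pos hi]
        simp
        positivity
      · rw [if_neg hi]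
        rw [zero_sub, norm_neg, hcoord i]
        have := hN i (by omega)
        rw [Real.dist_eq, sub_zero] at this
        have habs := le_abs_self ‖(g : L K) i - c • (1 : C(K i, ℝ))‖
        linarith
    have hfin : ‖∑ j ∈ Finset.range n, xSglCLM (K := K) j ((h : L K) j) - h‖ ≤ ε / 2 :=
      lp.norm_le_of_forall_le (by positivity) hcoordbound
    linarith
  have hpartial : ∀ n, (∑ j ∈ Finset.range n, xSglCLM (K := K) j ((h : L K) j)) ∈ M :=
    fun n => Submodule.sum_mem M (fun j _ => hsgl_all j _)
  have hinM : h ∈ M := hcl.mem_of_tendsto htend (Filter.Eventually.of_forall hpartial)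
  have hgdecomp : g = h + c • xOne := by rw [hh]; abel
  rw [hgdecomp]
  exact M.add_mem hinM (M.smul_mem c hone_mem)

end S16

namespace S16
variable {K : ℕ → Type} [∀ j, MetricSpace (K j)] [∀ j, CompactSpace (K j)]
  [∀ j, Nonempty (K j)]

theorem total_FV (fv : ∀ j, ℕ → C(K j, ℝ)) (fsv : ∀ j, ℕ → C(K j, ℝ) →L[ℝ] ℝ)
    (hφ1 : ∀ j, (fun i => fsv i 0) j 1 = 1) (hφn : ∀ j, ‖(fun i => fsv i 0) j‖ ≤ 1)
    (hb : ∀ j, IsAuerbachBasis (fv j) (fsv j)) :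
    ∀ g, (∀ o, FV fsv hφ1 hφn o g = 0) → g = 0 := by
  intro g hg
  have hinr : ∀ j k, fsv j (k + 1) ((g : L K) j) = 0 := fun j k => by
    have := hg (some (Sum.inr (j, k)))
    simpa only [FV, coordX_apply] using this
  have hinl : ∀ n, fsv (n + 1) 0 ((g : L K) (n + 1)) = fsv n 0 ((g : L K) n) := fun n => by
    have := hg (some (Sum.inl n))
    simp only [FV, ContinuousLinearMap.smul_apply, ContinuousLinearMap.sub_apply,
      coordX_apply, smul_eq_mul] at this
    linarith
  have hall : ∀ j, fsv j 0 ((g : L K) j) = fsv 0 0 ((g : L K) 0) := by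
    intro j
    induction j with
    | zero => rfl
    | succ n ih => rw [hinl n, ih]
  have hnone := hg none
  simp only [FV, ContinuousLinearMap.smul_apply, ContinuousLinearMap.add_apply,
    coordX_apply, climCLM_apply, smul_eq_mul] at hnone
  have htd : Tendsto (fun j => fsv j 0 ((g : L K) j)) atTop (nhds (climF g)) :=
    tendsto_phi_of_mem (climF_spec g) hφ1 hφn
  have hconst : Tendsto (fun _ : ℕ => fsv 0 0 ((g : L K) 0)) atTop (nhds (climF g)) :=
    htd.congr (fun j => hall j)
  have heq : fsv 0 0 ((g : L K) 0) = climF g := tendsto_nhds_unique tendsto_const_nhds hconst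
  have hzero : fsv 0 0 ((g : L K) 0) = 0 := by linarith
  have hallzero : ∀ j k, fsv j k ((g : L K) j) = 0 := by
    intro j k
    cases k with
    | zero => rw [hall j]; exact hzero
    | succ k => exact hinr j k
  have hcoordzero : ∀ j, (g : L K) j = 0 := fun j => (hb j).total _ (hallzero j)
  apply Subtype.ext
  refine lp.ext (funext fun i => ?_)
  rw [hcoordzero i]
  simp

end S16

/-- Auerbach bases transport along an equivalence of index sets. -/
theorem IsAuerbachBasis.reindex {X : Type*} [NormedAddCommGroup X] [NormedSpace ℝ X]
    {ι ι' : Type*} {x : ι → X} {F : ι → X →L[ℝ] ℝ} (h : IsAuerbachBasis x F) (e : ι' ≃ ι) :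
    IsAuerbachBasis (x ∘ e) (F ∘ e) where
  biorth_eq k := h.biorth_eq (e k)
  biorth_ne k j hkj := h.biorth_ne _ _ (fun hh => hkj (e.injective hh))
  norm_vec n := h.norm_vec _
  norm_fun n := h.norm_fun _
  fundamental := by
    rw [Set.range_comp, Equiv.range_eq_univ, Set.image_univ]
    exact h.fundamental
  total y hy := h.total y (fun n => by simpa using hy (e.symm n))

/-- An explicit equivalence `ℕ ≃ Option (ℕ ⊕ ℕ × ℕ)` sending `0` to `none`. -/
noncomputable def natEquivOpt : ℕ ≃ Option (ℕ ⊕ ℕ × ℕ) where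
  toFun n := match n with
    | 0 => none
    | n + 1 => some (Denumerable.ofNat (ℕ ⊕ ℕ × ℕ) n)
  invFun o := match o with
    | none => 0
    | some a => Encodable.encode a + 1
  left_inv n := by
    cases n with
    | zero => rfl
    | succ n => simp
  right_inv o := by
    cases o with
    | none => rfl
    | some a => simp

@[simp] lemma natEquivOpt_zero : natEquivOpt 0 = none := rfl

namespace S16
variable {K : ℕ → Type} [∀ j, MetricSpace (K j)] [∀ j, CompactSpace (K j)]
  [∀ j, Nonempty (K j)]
variable (fv : ∀ j, ℕ → C(K j, ℝ)) (fsv : ∀ j, ℕ → C(K j, ℝ) →L[ℝ] ℝ)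
variable (hφ1 : ∀ j, (fun i => fsv i 0) j 1 = 1) (hφn : ∀ j, ‖(fun i => fsv i 0) j‖ ≤ 1)

theorem mainAux (hb : ∀ j, IsAuerbachBasis (fv j) (fsv j)) (hone : ∀ j, fv j 0 = 1) :
    IsAuerbachBasis (XV fv) (FV fsv hφ1 hφn) := by
  have h1 : ∀ j, fsv j 0 (1 : C(K j, ℝ)) = 1 := hφ1
  have fs_one : ∀ j k, k ≠ 0 → fsv j k (1 : C(K j, ℝ)) = 0 := fun j k hk => by
    rw [← hone j]; exact (hb j).biorth_ne k 0 hk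
  have fs_f : ∀ j k m, k ≠ m → fsv j k (fv j m) = 0 := fun j k m h => (hb j).biorth_ne k m h
  -- biorthogonality, the diagonal
  have hbeq : ∀ o, FV fsv hφ1 hφn o (XV fv o) = 1 := by
    rintro (_ | (n | ⟨j, k⟩))
    · simp only [FV, XV, ContinuousLinearMap.smul_apply, ContinuousLinearMap.add_apply,
        coordX_apply, climCLM_apply, xOne_coe, oneV_apply, smul_eq_mul]
      rw [climF_xOne, h1 0]
      norm_num
    · simp only [FV, XV, ContinuousLinearMap.smul_apply, ContinuousLinearMap.sub_apply,
        coordX_apply, xV_coe, smul_eq_mul]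
      rw [vV_apply, vV_apply, if_neg (by omega), if_pos (le_refl n), map_neg, h1 n, h1 (n + 1)]
      norm_num
    · simp only [FV, XV, coordX_apply, xSgl_coe]
      rw [sgl_apply_self]
      exact (hb j).biorth_eq (k + 1)
  -- the norms of the vectors
  have hnv : ∀ o, ‖XV (K := K) fv o‖ = 1 := by
    rintro (_ | (n | ⟨j, k⟩))
    · exact norm_xOne
    · exact norm_xV n
    · show ‖xSgl j (fv j (k + 1))‖ = 1
      rw [norm_xSgl]
      exact (hb j).norm_vec (k + 1)
  -- fsv applied to the coordinates of a single-block element with nonzero block index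
  have hsgl0 : ∀ (j k i : ℕ), fsv i 0 ((sgl (K := K) j (fv j (k + 1))) i) = 0 := by
    intro j k i
    rcases eq_or_ne i j with rfl | hij
    · rw [sgl_apply_self]; exact fs_f i 0 (k + 1) (by omega)
    · rw [sgl_apply_ne _ _ hij]; simp
  refine ⟨hbeq, ?_, hnv, ?_, fund_XV fv (fun j => (hb j).fundamental) hone, total_FV fv fsv hφ1 hφn hb⟩
  · -- biorth_ne
    rintro (_ | (n | ⟨j, k⟩)) (_ | (m | ⟨j', k'⟩)) hne
    · exact absurd rfl hne
    · simp only [FV, XV, ContinuousLinearMap.smul_apply, ContinuousLinearMap.add_apply,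
        coordX_apply, climCLM_apply, xV_coe, smul_eq_mul]
      rw [climF_xV, vV_apply, if_pos (Nat.zero_le m), map_neg, h1 0]
      norm_num
    · simp only [FV, XV, ContinuousLinearMap.smul_apply, ContinuousLinearMap.add_apply,
        coordX_apply, climCLM_apply, xSgl_coe, smul_eq_mul]
      rw [climF_xSgl, hsgl0 j' k' 0]
      norm_num
    · simp only [FV, XV, ContinuousLinearMap.smul_apply, ContinuousLinearMap.sub_apply,
        coordX_apply, xOne_coe, oneV_apply, smul_eq_mul]
      rw [h1 n, h1 (n + 1)]
      norm_num
    · -- inl n vs inl m, n ≠ m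
      have hnm : n ≠ m := fun h => hne (by rw [h])
      simp only [FV, XV, ContinuousLinearMap.smul_apply, ContinuousLinearMap.sub_apply,
        coordX_apply, xV_coe, smul_eq_mul]
      rw [vV_apply, vV_apply]
      by_cases h : n ≤ m
      · rw [if_pos (by omega), if_pos h, map_neg, map_neg, h1 n, h1 (n + 1)]
        norm_num
      · rw [if_neg (by omega), if_neg h, h1 n, h1 (n + 1)]
        norm_num
    · simp only [FV, XV, ContinuousLinearMap.smul_apply, ContinuousLinearMap.sub_apply,
        coordX_apply, xSgl_coe, smul_eq_mul]
      rw [hsgl0 j' k' n, hsgl0 j' k' (n + 1)]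
      norm_num
    · simp only [FV, XV, coordX_apply, xOne_coe, oneV_apply]
      exact fs_one j (k + 1) (by omega)
    · simp only [FV, XV, coordX_apply, xV_coe]
      rw [vV_apply]
      by_cases h : j ≤ m
      · rw [if_pos h, map_neg, fs_one j (k + 1) (by omega)]
        norm_num
      · rw [if_neg h]
        exact fs_one j (k + 1) (by omega)
    · -- inr vs inr
      simp only [FV, XV, coordX_apply, xSgl_coe]
      rcases eq_or_ne j j' with rfl | hjj
      · have hkk : k ≠ k' := by
          intro h
          exact hne (by rw [h])
        rw [sgl_apply_self]
        exact fs_f j (k + 1) (k' + 1) (by omega)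
      · rw [sgl_apply_ne _ _ hjj]
        simp
  · -- norm_fun
    rintro (_ | (n | ⟨j, k⟩)) <;>
      refine le_antisymm ?_ ?_
    · refine ContinuousLinearMap.opNorm_le_bound _ zero_le_one (fun g => ?_)
      simp only [FV, ContinuousLinearMap.smul_apply, ContinuousLinearMap.add_apply,
        coordX_apply, climCLM_apply, smul_eq_mul]
      have ha : ‖fsv 0 0 ((g : L K) 0)‖ ≤ ‖g‖ := by
        calc ‖fsv 0 0 ((g : L K) 0)‖ ≤ ‖fsv 0 0‖ * ‖(g : L K) 0‖ := (fsv 0 0).le_opNorm _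
        _ ≤ 1 * ‖g‖ := mul_le_mul (hφn 0) (norm_coord_le g 0) (norm_nonneg _) zero_le_one
        _ = ‖g‖ := one_mul _
      have hc : ‖climF g‖ ≤ ‖g‖ := abs_climF_le g
      rw [Real.norm_eq_abs] at ha hc ⊢
      rw [abs_mul]
      have := abs_add_le (fsv 0 0 ((g : L K) 0)) (climF g)
      rw [abs_of_pos (by norm_num : (0:ℝ) < 2⁻¹)]
      rw [one_mul]
      linarith
    · have h := (FV fsv hφ1 hφn none).unit_le_opNorm (XV fv none) (le_of_eq (hnv none))
      rw [hbeq none] at h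
      simpa using h
    · refine ContinuousLinearMap.opNorm_le_bound _ zero_le_one (fun g => ?_)
      simp only [FV, ContinuousLinearMap.smul_apply, ContinuousLinearMap.sub_apply,
        coordX_apply, smul_eq_mul]
      have key : ∀ i, ‖fsv i 0 ((g : L K) i)‖ ≤ ‖g‖ := fun i => by
        calc ‖fsv i 0 ((g : L K) i)‖ ≤ ‖fsv i 0‖ * ‖(g : L K) i‖ := (fsv i 0).le_opNorm _
        _ ≤ 1 * ‖g‖ := mul_le_mul (hφn i) (norm_coord_le g i) (norm_nonneg _) zero_le_one
        _ = ‖g‖ := one_mul _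
      have ha := key (n + 1)
      have hc := key n
      rw [Real.norm_eq_abs] at ha hc ⊢
      rw [abs_mul]
      have := abs_sub (fsv (n + 1) 0 ((g : L K) (n + 1))) (fsv n 0 ((g : L K) n))
      rw [abs_of_pos (by norm_num : (0:ℝ) < 2⁻¹)]
      rw [one_mul]
      linarith
    · have h := (FV fsv hφ1 hφn (some (Sum.inl n))).unit_le_opNorm (XV fv (some (Sum.inl n)))
        (le_of_eq (hnv (some (Sum.inl n))))
      rw [hbeq (some (Sum.inl n))] at h
      simpa using h
    · show ‖coordX j (fsv j (k + 1))‖ ≤ 1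
      exact norm_coordX_le j _ (le_of_eq ((hb j).norm_fun (k + 1)))
    · have h := (FV fsv hφ1 hφn (some (Sum.inr (j, k)))).unit_le_opNorm
        (XV fv (some (Sum.inr (j, k)))) (le_of_eq (hnv (some (Sum.inr (j, k)))))
      rw [hbeq (some (Sum.inr (j, k)))] at h
      simpa using h

end S16

/-- If every `C(Kⱼ)` has an Auerbach basis `(f_{k,j}; f^*_{k,j})_{k≥0}`
whose zeroth vector is the constant function `1`, then the unitization
`X = (C(K₁) ⊕ C(K₂) ⊕ ⋯)_{c₀} ⊕ 1` admits an Auerbach basis `(x_k; x_k^*)_{k≥0}` with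
`x₀ = (0, 1)`, i.e. the element all of whose blocks are the constant function `1`. -/
theorem stmt16 (K : ℕ → Type) [∀ j, MetricSpace (K j)] [∀ j, CompactSpace (K j)]
    (f : ∀ j, ℕ → C(K j, ℝ)) (fs : ∀ j, ℕ → C(K j, ℝ) →L[ℝ] ℝ)
    (hb : ∀ j, IsAuerbachBasis (f j) (fs j)) (hone : ∀ j, f j 0 = 1) :
    ∃ (x : ℕ → unitizationSub K) (xs : ℕ → (unitizationSub K) →L[ℝ] ℝ),
      IsAuerbachBasis x xs ∧
      ∀ j : ℕ, (x 0 : lp (fun j => C(K j, ℝ)) ∞) j = 1 := by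
  haveI hne : ∀ j, Nonempty (K j) := by
    intro j
    by_contra hcon
    rw [not_nonempty_iff] at hcon
    have h1 := (hb j).norm_vec 0
    rw [hone j] at h1
    have hz : (1 : C(K j, ℝ)) = 0 := by
      ext ω
      exact (hcon.false ω).elim
    rw [hz, norm_zero] at h1
    exact zero_ne_one h1
  have hφ1 : ∀ j, (fun i => fs i 0) j (1 : C(K j, ℝ)) = 1 := fun j => by
    show fs j 0 (1 : C(K j, ℝ)) = 1
    rw [← hone j]
    exact (hb j).biorth_eq 0
  have hφn : ∀ j, ‖(fun i => fs i 0) j‖ ≤ 1 := fun j => le_of_eq ((hb j).norm_fun 0)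
  have hA := (S16.mainAux f fs hφ1 hφn hb hone).reindex natEquivOpt
  refine ⟨_, _, hA, fun j => rfl⟩
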